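/- Main theorem (two factors): Let G and H be qf-stable groups, w(x̄, ȳ) a group word, and r ≥ 1 a natural number. Then there exists a natural number n (depending on w and r) bounding the set of natural numbers m for which there exist tuples ā_1,...,ā_m and b̄_1,...,b̄_m with all entries in the ball B_r(G ∗ H) such that w(ā_i, b̄_j) = 1 in G ∗ H iff i ≤ j. -/

import Mathlib

open Monoid

/-- A group `G` is qf-stable if every group-word equation `w(x̄, ȳ) = 1` defines a
stable relation on tuples from `G`. -/
def QFStable (G : Type*) [Group G] : Prop :=
  ∀ (p q : ℕ) (w : FreeGroup (Fin p ⊕ Fin q)), ∃ n : ℕ, ∀ m : ℕ,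
    (∃ (a : Fin m → Fin p → G) (b : Fin m → Fin q → G),
      ∀ i j, FreeGroup.lift (Sum.elim (a i) (b j)) w = 1 ↔ i ≤ j) → m ≤ n

/-- The ball of radius `r` in `G ∗ H`: elements whose normal form has length at
most `r`, equivalently products of at most `r` letters from `G` or `H`. -/
def coprodBall (G H : Type*) [Group G] [Group H] (r : ℕ) : Set (Coprod G H) :=
  {x | ∃ l : List (Coprod G H), l.length ≤ r ∧
    (∀ y ∈ l, (∃ g : G, y = Coprod.inl g) ∨ (∃ h : H, y = Coprod.inr h)) ∧
    x = l.prod}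


section Ramsey

private lemma prehom (κ : Type) [Fintype κ] [Nonempty κ] :
    ∀ t : ℕ, ∃ n : ℕ, ∀ (f : ℕ → ℕ → κ) (A : Finset ℕ), n ≤ A.card →
      ∃ (g : Fin t → ℕ) (c : Fin t → κ), StrictMono g ∧ (∀ k, g k ∈ A) ∧
        ∀ k l : Fin t, k < l → f (g k) (g l) = c k := by
  intro t
  induction t with
  | zero =>
      exact ⟨0, fun f A _ => ⟨Fin.elim0, Fin.elim0, fun k => k.elim0, fun k => k.elim0,
        fun k => k.elim0⟩⟩
  | succ t ih =>
      obtain ⟨n, hn⟩ := ih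
      classical
      refine ⟨Fintype.card κ * n + 1, fun f A hA => ?_⟩
      have hA0 : A.Nonempty := Finset.card_pos.mp (by omega)
      have hxA : A.min' hA0 ∈ A := A.min'_mem hA0
      set x := A.min' hA0 with hx
      have hcard : Fintype.card κ * n ≤ (A.erase x).card := by
        rw [Finset.card_erase_of_mem hxA]; omega
      obtain ⟨c₀, -, hc₀⟩ := Finset.exists_le_card_fiber_of_mul_le_card_of_maps_to
        (f := fun y => f x y) (t := (Finset.univ : Finset κ)) (s := A.erase x)
        (fun a _ => Finset.mem_univ _) Finset.univ_nonempty (by simpa using hcard)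
      obtain ⟨g, c, hg, hmem, hcol⟩ := hn f _ hc₀
      have hgA : ∀ k, g k ∈ A.erase x ∧ f x (g k) = c₀ := by
        intro k; have := hmem k; simp only [Finset.mem_filter] at this; exact this
      have hxg : ∀ k, x < g k := fun k => Finset.min'_lt_of_mem_erase_min' _ hA0 (hgA k).1
      refine ⟨Fin.cons x g, Fin.cons c₀ c, ?_, ?_, ?_⟩
      · intro k l hkl
        induction k using Fin.cases with
        | zero =>
            induction l using Fin.cases with
            | zero => exact absurd hkl (lt_irrefl _)
            | succ j => simpa using hxg j
        | succ i =>
            induction l using Fin.cases with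
            | zero => exact absurd hkl (by simp [Fin.lt_def])
            | succ j => simpa using hg (Fin.succ_lt_succ_iff.mp hkl)
      · intro k
        induction k using Fin.cases with
        | zero => simpa using hxA
        | succ i => simpa using A.erase_subset x (hgA i).1
      · intro k l hkl
        induction k using Fin.cases with
        | zero =>
            induction l using Fin.cases with
            | zero => exact absurd hkl (lt_irrefl _)
            | succ j => simpa using (hgA j).2
        | succ i =>
            induction l using Fin.cases with
            | zero => exact absurd hkl (by simp [Fin.lt_def])
            | succ j => simpa using hcol i j (Fin.succ_lt_succ_iff.mp hkl)

private lemma ramsey_pairs (κ : Type) [Fintype κ] [Nonempty κ] (s : ℕ) :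
    ∃ n : ℕ, ∀ (f : ℕ → ℕ → κ) (A : Finset ℕ), n ≤ A.card →
      ∃ (g : Fin s → ℕ) (c : κ), StrictMono g ∧ (∀ k, g k ∈ A) ∧
        ∀ k l : Fin s, k < l → f (g k) (g l) = c := by
  classical
  obtain ⟨n, hn⟩ := prehom κ (Fintype.card κ * s + 1)
  refine ⟨n, fun f A hA => ?_⟩
  obtain ⟨g, c, hg, hmem, hcol⟩ := hn f A hA
  obtain ⟨c₀, -, hc₀⟩ := Finset.exists_le_card_fiber_of_mul_le_card_of_maps_to
    (f := c) (t := (Finset.univ : Finset κ)) (s := (Finset.univ : Finset (Fin _)))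
    (n := s) (fun a _ => Finset.mem_univ _) Finset.univ_nonempty
    (by simpa using Nat.le_succ (Fintype.card κ * s))
  have hsc : s ≤ (Finset.univ.filter (fun k => c k = c₀)).card := hc₀
  set F := Finset.univ.filter (fun k => c k = c₀) with hF
  refine ⟨fun k => g (F.orderEmbOfCardLe hsc k), c₀, ?_, fun k => hmem _, ?_⟩
  · exact fun k l hkl => hg ((F.orderEmbOfCardLe hsc).strictMono hkl)
  · intro k l hkl
    have h1 := hcol (F.orderEmbOfCardLe hsc k) (F.orderEmbOfCardLe hsc l)
      ((F.orderEmbOfCardLe hsc).strictMono hkl)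
    have h2 : c (F.orderEmbOfCardLe hsc k) = c₀ :=
      (Finset.mem_filter.mp (F.orderEmbOfCardLe_mem hsc k)).2
    rw [h1, h2]

end Ramsey


section NormalForm

universe u v

private def Fam (G : Type u) (H : Type v) : Bool → Type (max u v) :=
  fun b => cond b (ULift.{v} G) (ULift.{u} H)

private instance famGroup (G : Type u) (H : Type v) [Group G] [Group H] :
    ∀ b, Group (Fam G H b)
  | true => inferInstanceAs (Group (ULift G))
  | false => inferInstanceAs (Group (ULift H))

variable (G : Type u) (H : Type v) [Group G] [Group H]

private def emb : G ⊕ H → Coprod G H := Sum.elim Coprod.inl Coprod.inr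

variable {G H}

private def lam : G ⊕ H → Σ b, Fam G H b :=
  Sum.elim (fun g => ⟨true, ULift.up g⟩) (fun h => ⟨false, ULift.up h⟩)

private def phi : Coprod G H →* CoprodI (Fam G H) :=
  Coprod.lift
    ((CoprodI.of (i := true)).comp (MulEquiv.ulift.symm : G ≃* ULift G).toMonoidHom)
    ((CoprodI.of (i := false)).comp (MulEquiv.ulift.symm : H ≃* ULift H).toMonoidHom)

private lemma phi_emb (x : G ⊕ H) : phi (emb G H x) = CoprodI.of (lam x).2 := by
  cases x <;> rfl

private lemma word_prod_injective :
    Function.Injective (CoprodI.Word.prod (M := Fam G H)) := by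
  classical
  let e := @CoprodI.Word.equiv Bool (Fam G H) (fun b => (famGroup G H b).toMonoid) instDecidableEqBool
    (fun _ => Classical.decEq _)
  intro w1 w2 h
  have h' : e.symm w1 = e.symm w2 := h
  simpa using congrArg e h'

private lemma prod_ne_one_of_reduced (l : List (G ⊕ H)) (hne : l ≠ [])
    (h1 : ∀ x ∈ l, Sum.elim (fun g => g ≠ (1 : G)) (fun h => h ≠ (1 : H)) x)
    (hch : l.IsChain fun x y => x.isLeft ≠ y.isLeft) :
    (l.map (emb G H)).prod ≠ 1 := by
  classical
  have hne1 : ∀ x ∈ l.map lam, Sigma.snd x ≠ 1 := by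
    intro x hx
    obtain ⟨y, hy, rfl⟩ := List.mem_map.mp hx
    have := h1 y hy
    cases y with
    | inl g => intro hc; exact (by simpa using this : g ≠ 1) (congrArg ULift.down hc)
    | inr h => intro hc; exact (by simpa using this : h ≠ 1) (congrArg ULift.down hc)
  have hch1 : (l.map lam).IsChain fun a b => a.1 ≠ b.1 := by
    rw [List.isChain_map]
    refine hch.imp ?_
    intro a b hab
    cases a <;> cases b <;> simp_all [lam]
  set W : CoprodI.Word (Fam G H) := ⟨l.map lam, hne1, hch1⟩ with hW
  intro hcon
  have hprod : W.prod = 1 := by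
    have : W.prod = phi ((l.map (emb G H)).prod) := by
      rw [map_list_prod]
      show ((l.map lam).map fun x => CoprodI.of x.snd).prod = ((l.map (emb G H)).map ⇑phi).prod
      rw [List.map_map, List.map_map]
      congr 1
      exact List.map_congr_left fun x _ => (phi_emb x).symm
    rw [this, hcon, map_one]
  have : W = CoprodI.Word.empty := word_prod_injective (by rw [hprod]; rfl)
  have : l.map lam = [] := congrArg CoprodI.Word.toList this
  exact hne (List.map_eq_nil_iff.mp this)

end NormalForm
universe w

section Abs

variable {G : Type u} {H : Type v} [Group G] [Group H] {ι : Type w} [LinearOrder ι]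

private def evalS (vg : ι → G) (vh : ι → H) (s : Bool × Finset ι) : G ⊕ H :=
  if s.1 then Sum.inl ((s.2.sort (· ≤ ·)).map vg).prod
  else Sum.inr ((s.2.sort (· ≤ ·)).map vh).prod

private def IsOne : G ⊕ H → Prop := Sum.elim (fun g => g = 1) (fun h => h = 1)

private def ordL : Bool × Finset ι → Bool × Finset ι → Prop :=
  fun s t => ∀ i ∈ s.2, ∀ j ∈ t.2, i < j

private def OrderedL (L : List (Bool × Finset ι)) : Prop :=
  L.IsChain ordL ∧ ∀ s ∈ L, s.2.Nonempty

private inductive AbsRed (ok : Bool × Finset ι → Prop) : List (Bool × Finset ι) → Prop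
  | nil : AbsRed ok []
  | del (l₁ l₂ x) (hx : ok x) (h : AbsRed ok (l₁ ++ l₂)) : AbsRed ok (l₁ ++ x :: l₂)
  | merge (l₁ l₂ b S T) (h : AbsRed ok (l₁ ++ (b, S ∪ T) :: l₂)) :
      AbsRed ok (l₁ ++ (b, S) :: (b, T) :: l₂)

private lemma AbsRed.congr_ok {ok ok' : Bool × Finset ι → Prop} (hok : ∀ s, ok s ↔ ok' s)
    {L} (h : AbsRed ok L) : AbsRed ok' L := by
  induction h with
  | nil => exact .nil
  | del l₁ l₂ x hx _ ih => exact .del l₁ l₂ x ((hok x).mp hx) ih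
  | merge l₁ l₂ b S T _ ih => exact .merge l₁ l₂ b S T ih

private lemma sort_union {S T : Finset ι} (h : ∀ i ∈ S, ∀ j ∈ T, i < j) :
    (S ∪ T).sort (· ≤ ·) = S.sort (· ≤ ·) ++ T.sort (· ≤ ·) := by
  have hd : Disjoint S T :=
    Finset.disjoint_left.mpr (fun {a} ha ha' => lt_irrefl a (h a ha a ha'))
  have hperm : List.Perm ((S ∪ T).sort (· ≤ ·)) (S.sort (· ≤ ·) ++ T.sort (· ≤ ·)) := by
    rw [← Multiset.coe_eq_coe]
    have h1 : (((S ∪ T).sort (· ≤ ·) : List ι) : Multiset ι) = (S ∪ T).val :=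
      Finset.sort_eq _ _
    have h2 : ((S.sort (· ≤ ·) ++ T.sort (· ≤ ·) : List ι) : Multiset ι) = S.val + T.val := by
      rw [← Multiset.coe_add, Finset.sort_eq, Finset.sort_eq]
    rw [h1, h2, ← Finset.disjUnion_eq_union S T hd]
    rfl
  have hs2 : List.Pairwise (· ≤ ·) (S.sort (· ≤ ·) ++ T.sort (· ≤ ·)) :=
    List.pairwise_append.mpr ⟨Finset.pairwise_sort _ _, Finset.pairwise_sort _ _,
      fun a ha b hb => le_of_lt (h a ((Finset.mem_sort _).mp ha) b ((Finset.mem_sort _).mp hb))⟩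
  exact List.Perm.eq_of_pairwise' (Finset.pairwise_sort _ _) hs2 hperm

private lemma emb_evalS_union {vg : ι → G} {vh : ι → H} {b : Bool} {S T : Finset ι}
    (h : ∀ i ∈ S, ∀ j ∈ T, i < j) :
    emb G H (evalS vg vh (b, S ∪ T)) = emb G H (evalS vg vh (b, S)) * emb G H (evalS vg vh (b, T)) := by
  cases b <;>
    simp [emb, evalS, sort_union h, List.prod_append, map_mul]

private lemma emb_evalS_one {vg : ι → G} {vh : ι → H} {x : Bool × Finset ι}
    (h : IsOne (evalS vg vh x)) : emb G H (evalS vg vh x) = 1 := by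
  rcases hx : evalS vg vh x with g | hh <;> rw [hx] at h <;>
    simp only [IsOne, Sum.elim_inl, Sum.elim_inr] at h <;> simp [emb, h]

private lemma prod_merge {vg : ι → G} {vh : ι → H} {l₁ l₂ : List (Bool × Finset ι)}
    {b : Bool} {S T : Finset ι} (hST : ordL (b, S) (b, T)) :
    ((l₁ ++ (b, S ∪ T) :: l₂).map (fun s => emb G H (evalS vg vh s))).prod
      = ((l₁ ++ (b, S) :: (b, T) :: l₂).map (fun s => emb G H (evalS vg vh s))).prod := by
  simp only [List.map_append, List.map_cons, List.prod_append, List.prod_cons]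
  rw [emb_evalS_union (by exact hST)]
  simp [mul_assoc]

private lemma prod_del {vg : ι → G} {vh : ι → H} {l₁ l₂ : List (Bool × Finset ι)}
    {x : Bool × Finset ι} (hx : IsOne (evalS vg vh x)) :
    ((l₁ ++ x :: l₂).map (fun s => emb G H (evalS vg vh s))).prod
      = ((l₁ ++ l₂).map (fun s => emb G H (evalS vg vh s))).prod := by
  simp only [List.map_append, List.map_cons, List.prod_append, List.prod_cons]
  rw [emb_evalS_one hx]
  simp

private lemma ordL_trans {s t u : Bool × Finset ι} (hst : ordL s t) (htu : ordL t u)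
    (hne : t.2.Nonempty) : ordL s u := by
  obtain ⟨i0, hi0⟩ := hne
  exact fun i hi j hj => lt_trans (hst i hi i0 hi0) (htu i0 hi0 j hj)

private lemma ordered_del {l₁ l₂ : List (Bool × Finset ι)} {x}
    (h : OrderedL (l₁ ++ x :: l₂)) : OrderedL (l₁ ++ l₂) := by
  obtain ⟨hc, hne⟩ := h
  have hxne : x.2.Nonempty := hne x (by simp)
  constructor
  · rw [List.isChain_append] at hc ⊢
    obtain ⟨h1, h2, h3⟩ := hc
    rw [List.isChain_cons] at h2
    refine ⟨h1, h2.2, fun a ha b hb => ?_⟩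
    exact ordL_trans (h3 a ha x (by simp)) (h2.1 b hb) hxne
  · intro s hs
    rw [List.mem_append] at hs
    exact hne s (by rcases hs with h | h <;> simp [h])

private lemma ordered_merge {l₁ l₂ : List (Bool × Finset ι)} {b S T}
    (h : OrderedL (l₁ ++ (b, S) :: (b, T) :: l₂)) : OrderedL (l₁ ++ (b, S ∪ T) :: l₂) := by
  obtain ⟨hc, hne⟩ := h
  have hSne : S.Nonempty := by simpa using hne (b, S) (by simp)
  have hTne : T.Nonempty := by simpa using hne (b, T) (by simp)
  rw [List.isChain_append] at hc
  obtain ⟨h1, h2, h3⟩ := hc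
  rw [List.isChain_cons_cons] at h2
  obtain ⟨hST, h2⟩ := h2
  rw [List.isChain_cons] at h2
  obtain ⟨hTl, h2⟩ := h2
  constructor
  · rw [List.isChain_append]
    refine ⟨h1, ?_, ?_⟩
    · rw [List.isChain_cons]
      refine ⟨fun y hy => ?_, h2⟩
      intro i hi j hj
      rcases Finset.mem_union.mp hi with hi | hi
      · exact lt_trans (hST i hi (T.min' hTne) (T.min'_mem hTne)) (hTl y hy (T.min' hTne) (T.min'_mem hTne) j hj)
      · exact hTl y hy i hi j hj
    · intro a ha y hy
      simp only [List.head?_cons, Option.mem_def, Option.some.injEq] at hy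
      subst hy
      have hax : ordL a (b, S) := h3 a ha (b, S) (by simp)
      intro i hi j hj
      rcases Finset.mem_union.mp hj with hj | hj
      · exact hax i hi j hj
      · exact lt_trans (hax i hi (S.min' hSne) (S.min'_mem hSne)) (hST (S.min' hSne) (S.min'_mem hSne) j hj)
  · intro s hs
    rw [List.mem_append] at hs
    rcases hs with h | h
    · exact hne s (by simp [h])
    · rcases List.mem_cons.mp h with rfl | h
      · exact ⟨S.min' hSne, by simp [Finset.mem_union, S.min'_mem hSne]⟩
      · exact hne s (by simp [h])

private lemma prod_eq_one_of_absRed {vg : ι → G} {vh : ι → H} {ok : Bool × Finset ι → Prop}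
    (hok : ∀ s, ok s → IsOne (evalS vg vh s)) :
    ∀ {L}, AbsRed ok L → OrderedL L →
      ((L.map (fun s => emb G H (evalS vg vh s))).prod = 1) := by
  intro L h
  induction h with
  | nil => simp
  | del l₁ l₂ x hx _ ih =>
      intro hord
      rw [prod_del (hok x hx)]
      exact ih (ordered_del hord)
  | merge l₁ l₂ b S T _ ih =>
      intro hord
      have hST : ordL (b, S) (b, T) := by
        have hc := hord.1
        rw [List.isChain_append] at hc
        exact (List.isChain_cons_cons.mp hc.2.1).1
      rw [← prod_merge hST]
      exact ih (ordered_merge hord)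

private lemma chain_tags {L : List (Bool × Finset ι)}
    (h : ¬ ∃ (l₁ : List (Bool × Finset ι)) (b : Bool) (S T : Finset ι) (l₂ : List (Bool × Finset ι)), L = l₁ ++ (b, S) :: (b, T) :: l₂) :
    L.IsChain (fun s t => s.1 ≠ t.1) := by
  induction L with
  | nil => simp
  | cons a L ih =>
      cases L with
      | nil => simp
      | cons a' L' =>
          rw [List.isChain_cons_cons]
          constructor
          · intro hc
            refine h ⟨[], a'.1, a.2, a'.2, L', ?_⟩
            have ha : ((a'.1, a.2) : Bool × Finset ι) = a := by rw [← hc]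
            rw [List.nil_append, ha]
          · refine ih ?_
            rintro ⟨l₁, b, S, T, l₂, hEq⟩
            exact h ⟨a :: l₁, b, S, T, l₂, by rw [hEq]; rfl⟩

private lemma absRed_of_prod_eq_one {vg : ι → G} {vh : ι → H} :
    ∀ (n : ℕ) (L : List (Bool × Finset ι)), L.length ≤ n → OrderedL L →
      ((L.map (fun s => emb G H (evalS vg vh s))).prod = 1) →
      AbsRed (fun s => IsOne (evalS vg vh s)) L := by
  classical
  intro n
  induction n with
  | zero =>
      intro L hL _ _
      rw [List.length_eq_zero_iff.mp (Nat.le_zero.mp hL)]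
      exact .nil
  | succ n ih =>
      intro L hL hord hprod
      by_cases hadj : ∃ (l₁ : List (Bool × Finset ι)) (b : Bool) (S T : Finset ι) (l₂ : List (Bool × Finset ι)), L = l₁ ++ (b, S) :: (b, T) :: l₂
      · obtain ⟨l₁, b, S, T, l₂, rfl⟩ := hadj
        have hST : ordL (b, S) (b, T) := by
          have hc := hord.1
          rw [List.isChain_append] at hc
          exact (List.isChain_cons_cons.mp hc.2.1).1
        refine AbsRed.merge l₁ l₂ b S T (ih _ ?_ (ordered_merge hord) ?_)
        · have := hL; simp only [List.length_append, List.length_cons] at this ⊢; omega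
        · rw [prod_merge hST]; exact hprod
      · by_cases hdel : ∃ (l₁ : List (Bool × Finset ι)) (x : Bool × Finset ι) (l₂ : List (Bool × Finset ι)), L = l₁ ++ x :: l₂ ∧ IsOne (evalS vg vh x)
        · obtain ⟨l₁, x, l₂, rfl, hx⟩ := hdel
          refine AbsRed.del l₁ l₂ x hx (ih _ ?_ (ordered_del hord) ?_)
          · have := hL; simp only [List.length_append, List.length_cons] at this ⊢; omega
          · rw [prod_del hx] at hprod; exact hprod
        · rcases L with _ | ⟨a, L'⟩
          · exact .nil
          · exfalso
            push_neg at hdel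
            have hno : ∀ x ∈ (a :: L'), ¬ IsOne (evalS vg vh x) := by
              intro x hx
              obtain ⟨s, t, heq⟩ := List.append_of_mem hx
              exact fun hc => hdel s x t heq hc
            refine prod_ne_one_of_reduced ((a :: L').map (evalS vg vh)) (by simp) ?_ ?_ ?_
            · intro y hy
              obtain ⟨x, hx, rfl⟩ := List.mem_map.mp hy
              have := hno x hx
              rcases hval : evalS vg vh x with g | hh <;> rw [hval] at this <;>
                simpa [IsOne] using this
            · rw [List.isChain_map]
              have := chain_tags (ι := ι) hadj
              refine this.imp ?_
              intro s t hst
              have h1 : (evalS vg vh s).isLeft = s.1 := by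
                rcases s with ⟨bs, Ss⟩; cases bs <;> simp [evalS]
              have h2 : (evalS vg vh t).isLeft = t.1 := by
                rcases t with ⟨bt, St⟩; cases bt <;> simp [evalS]
              rw [h1, h2]; exact hst
            · rw [List.map_map]
              exact hprod

end Abs

section Templ

private lemma finRange_reverse (r : ℕ) :
    (List.finRange r).reverse = (List.finRange r).map Fin.rev := by
  apply List.ext_getElem
  · simp
  · intro i h1 h2
    simp only [List.getElem_reverse, List.getElem_map, List.getElem_finRange]
    simp only [List.length_reverse, List.length_finRange] at h1
    ext
    simp [Fin.rev, Fin.cast]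
    omega

variable {p q r N₀ : ℕ}

private abbrev Idx (N₀ r : ℕ) := Fin N₀ ×ₗ (Fin r ×ₗ Bool)

private def gvar (x : Fin p ⊕ Fin q) (k : Fin r) : Fin (p * r) ⊕ Fin (q * r) :=
  Sum.map (fun t => finProdFinEquiv (t, k)) (fun t => finProdFinEquiv (t, k)) x

private def flatF {α : Type*} (d : (Fin p ⊕ Fin q) → Fin r → α) :
    Fin (p * r) ⊕ Fin (q * r) → α :=
  Sum.elim (fun u => d (Sum.inl (finProdFinEquiv.symm u).1) (finProdFinEquiv.symm u).2)
    (fun u => d (Sum.inr (finProdFinEquiv.symm u).1) (finProdFinEquiv.symm u).2)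

private lemma flatF_gvar {α : Type*} (d : (Fin p ⊕ Fin q) → Fin r → α) (x : Fin p ⊕ Fin q)
    (k : Fin r) : flatF d (gvar x k) = d x k := by
  cases x <;>
    simp only [flatF, gvar, Sum.map_inl, Sum.map_inr, Sum.elim_inl, Sum.elim_inr,
      Equiv.symm_apply_apply]

private def termF (occ : Fin N₀ → (Fin p ⊕ Fin q) × Bool) (n : Idx N₀ r) :
    FreeGroup (Fin (p * r) ⊕ Fin (q * r)) :=
  if (occ (ofLex n).1).2 then FreeGroup.of (gvar (occ (ofLex n).1).1 (ofLex (ofLex n).2).1)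
  else (FreeGroup.of (gvar (occ (ofLex n).1).1 (ofLex (ofLex n).2).1.rev))⁻¹

private def tagF (occ : Fin N₀ → (Fin p ⊕ Fin q) × Bool) (n : Idx N₀ r) : Bool :=
  xor (occ (ofLex n).1).2 (ofLex (ofLex n).2).2

private def idxL (N₀ r : ℕ) : List (Idx N₀ r) :=
  (((List.finRange N₀).map (fun n =>
    (((List.finRange r).map (fun k =>
      [toLex (n, toLex (k, false)), toLex (n, toLex (k, true))])).flatten))).flatten)

private def templ (occ : Fin N₀ → (Fin p ⊕ Fin q) × Bool) : List (Bool × Finset (Idx N₀ r)) :=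
  (idxL N₀ r).map (fun idx => (tagF occ idx, {idx}))

private def wordS (occ : Fin N₀ → (Fin p ⊕ Fin q) × Bool) (s : Bool × Finset (Idx N₀ r)) :
    FreeGroup (Fin (p * r) ⊕ Fin (q * r)) :=
  ((s.2.sort (· ≤ ·)).map (termF occ)).prod

private lemma idxL_pairwise : (idxL N₀ r).Pairwise (· < ·) := by
  rw [idxL, List.pairwise_flatten]
  constructor
  · intro l hl
    obtain ⟨n, -, rfl⟩ := List.mem_map.mp hl
    rw [List.pairwise_flatten]
    constructor
    · intro l' hl'
      obtain ⟨k, -, rfl⟩ := List.mem_map.mp hl'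
      refine List.pairwise_cons.mpr ⟨?_, by simp⟩
      intro a ha
      rw [List.mem_singleton] at ha
      subst ha
      rw [Prod.Lex.lt_iff]
      right
      exact ⟨rfl, by rw [Prod.Lex.lt_iff]; right; exact ⟨rfl, by simp [Bool.lt_iff]⟩⟩
    · rw [List.pairwise_map]
      refine List.Pairwise.imp ?_ (List.pairwise_lt_finRange r)
      intro k k' hkk' a ha b hb
      simp only [List.mem_cons, List.not_mem_nil, or_false] at ha hb
      rcases ha with rfl | rfl <;> rcases hb with rfl | rfl <;>
        (rw [Prod.Lex.lt_iff]; right; exact ⟨rfl, by rw [Prod.Lex.lt_iff]; left; exact hkk'⟩)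
  · rw [List.pairwise_map]
    refine List.Pairwise.imp ?_ (List.pairwise_lt_finRange N₀)
    intro n n' hnn' a ha b hb
    simp only [List.mem_flatten, List.mem_map] at ha hb
    obtain ⟨-, ⟨k, -, rfl⟩, ha⟩ := ha
    obtain ⟨-, ⟨k', -, rfl⟩, hb⟩ := hb
    simp only [List.mem_cons, List.not_mem_nil, or_false] at ha hb
    rcases ha with rfl | rfl <;> rcases hb with rfl | rfl <;>
      (rw [Prod.Lex.lt_iff]; left; exact hnn')

end Templ

section Templ2

variable {G : Type u} {H : Type v} [Group G] [Group H] {p q r N₀ : ℕ}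

private lemma ordered_templ (occ : Fin N₀ → (Fin p ⊕ Fin q) × Bool) :
    OrderedL (templ (r := r) occ) := by
  constructor
  · rw [templ, List.isChain_map]
    refine List.IsChain.imp ?_ (idxL_pairwise.isChain)
    intro a b hab i hi j hj
    rw [Finset.mem_singleton] at hi hj
    subst hi; subst hj; exact hab
  · intro s hs
    obtain ⟨idx, -, rfl⟩ := List.mem_map.mp hs
    exact ⟨idx, Finset.mem_singleton_self idx⟩

private lemma evalS_singleton (vg : Idx N₀ r → G) (vh : Idx N₀ r → H) (b : Bool)
    (idx : Idx N₀ r) :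
    evalS vg vh (b, {idx}) = if b then Sum.inl (vg idx) else Sum.inr (vh idx) := by
  cases b <;> simp [evalS, Finset.sort_singleton]

private lemma evalS_word (occ : Fin N₀ → (Fin p ⊕ Fin q) × Bool)
    (σg : Fin (p * r) ⊕ Fin (q * r) → G) (σh : Fin (p * r) ⊕ Fin (q * r) → H)
    (s : Bool × Finset (Idx N₀ r)) :
    evalS (fun n => FreeGroup.lift σg (termF occ n)) (fun n => FreeGroup.lift σh (termF occ n)) s
      = if s.1 then Sum.inl (FreeGroup.lift σg (wordS occ s))
        else Sum.inr (FreeGroup.lift σh (wordS occ s)) := by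
  rcases s with ⟨b, S⟩
  cases b <;>
    · simp only [evalS, wordS, if_true, if_false, Bool.false_eq_true, ite_true, ite_false]
      congr 1
      rw [map_list_prod, List.map_map]
      rfl

private lemma F_single (occ : Fin N₀ → (Fin p ⊕ Fin q) × Bool)
    (σg : Fin (p * r) ⊕ Fin (q * r) → G) (σh : Fin (p * r) ⊕ Fin (q * r) → H)
    (idx : Idx N₀ r) :
    emb G H (evalS (fun n => FreeGroup.lift σg (termF occ n))
        (fun n => FreeGroup.lift σh (termF occ n)) (tagF occ idx, {idx}))
      = if tagF occ idx then Coprod.inl (FreeGroup.lift σg (termF occ idx))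
        else Coprod.inr (FreeGroup.lift σh (termF occ idx)) := by
  rw [evalS_singleton]
  cases tagF occ idx <;> simp [emb]

private lemma templ_prod (occ : Fin N₀ → (Fin p ⊕ Fin q) × Bool)
    (dg : (Fin p ⊕ Fin q) → Fin r → G) (dh : (Fin p ⊕ Fin q) → Fin r → H) :
    (((templ occ).map (fun s => emb G H
        (evalS (fun n => FreeGroup.lift (flatF dg) (termF occ n))
               (fun n => FreeGroup.lift (flatF dh) (termF occ n)) s))).prod)
      = ((List.finRange N₀).map (fun n =>
          cond (occ n).2
            (((List.finRange r).map
              (fun k => Coprod.inl (dg (occ n).1 k) * Coprod.inr (dh (occ n).1 k))).prod)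
            ((((List.finRange r).map
              (fun k => Coprod.inl (dg (occ n).1 k) * Coprod.inr (dh (occ n).1 k))).prod)⁻¹))).prod
      := by
  rw [templ, idxL, List.map_map, List.map_flatten, List.prod_flatten, List.map_map,
    List.map_map]
  congr 1
  apply List.map_congr_left
  intro n hn
  simp only [Function.comp_apply]
  rw [List.map_flatten, List.prod_flatten, List.map_map, List.map_map]
  rcases hocc : occ n with ⟨x, sgn⟩
  simp only []
  have htag : ∀ (c : Bool) (k : Fin r),
      tagF occ (toLex ((n : Fin N₀), toLex (k, c))) = xor sgn c := by
    intro c k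
    simp [tagF, hocc]
  have htermval : ∀ (c : Bool) (k : Fin r), termF occ (toLex ((n : Fin N₀), toLex (k, c)))
      = if sgn then FreeGroup.of (gvar x k) else (FreeGroup.of (gvar x k.rev))⁻¹ := by
    intro c k
    simp [termF, hocc]
  cases sgn
  · -- inverted occurrence
    simp only [Bool.cond_false]
    have hinv : (((List.finRange r).map
          (fun k => Coprod.inl (dg x k) * Coprod.inr (dh x k))).prod)⁻¹
        = ((List.finRange r).map
          (fun k => (Coprod.inl (dg x k.rev) * Coprod.inr (dh x k.rev))⁻¹)).prod := by
      rw [List.prod_inv_reverse, List.map_map, ← List.map_reverse, finRange_reverse,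
        List.map_map]
      rfl
    rw [hinv]
    congr 1
    apply List.map_congr_left
    intro k hk
    simp only [Function.comp_apply, List.map_cons, List.map_nil, List.prod_cons,
      List.prod_nil, mul_one]
    rw [F_single, F_single, htag, htag, htermval, htermval]
    simp [map_inv, FreeGroup.lift_apply_of, flatF_gvar, mul_inv_rev]
  · -- positive occurrence
    simp only [Bool.cond_true]
    congr 1
    apply List.map_congr_left
    intro k hk
    simp only [Function.comp_apply, List.map_cons, List.map_nil, List.prod_cons,
      List.prod_nil, mul_one]
    rw [F_single, F_single, htag, htag, htermval, htermval]
    simp [map_inv, FreeGroup.lift_apply_of, flatF_gvar, mul_inv_rev]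

private lemma list_emb_decomp (l : List (Coprod G H))
    (hmem : ∀ y ∈ l, (∃ g : G, y = Coprod.inl g) ∨ (∃ h : H, y = Coprod.inr h)) :
    ∃ sl : List (G ⊕ H), sl.map (emb G H) = l := by
  induction l with
  | nil => exact ⟨[], rfl⟩
  | cons y l ih =>
      obtain ⟨sl, hsl⟩ := ih (fun z hz => hmem z (List.mem_cons_of_mem _ hz))
      rcases hmem y List.mem_cons_self with ⟨g, rfl⟩ | ⟨h, rfl⟩
      · exact ⟨Sum.inl g :: sl, by rw [List.map_cons, hsl]; rfl⟩
      · exact ⟨Sum.inr h :: sl, by rw [List.map_cons, hsl]; rfl⟩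

private lemma ball_decomp {r : ℕ} {x : Coprod G H} (hx : x ∈ coprodBall G H r) :
    ∃ (gs : Fin r → G) (hs : Fin r → H),
      x = ((List.finRange r).map (fun k => Coprod.inl (gs k) * Coprod.inr (hs k))).prod := by
  classical
  obtain ⟨l, hlen, hmem, rfl⟩ := hx
  obtain ⟨sl, rfl⟩ := list_emb_decomp l hmem
  have hslen : sl.length ≤ r := by simpa using hlen
  obtain ⟨t, htlen, htprod⟩ : ∃ t : List (G ⊕ H), t.length = r ∧
      (t.map (emb G H)).prod = (sl.map (emb G H)).prod := by
    refine ⟨sl ++ List.replicate (r - sl.length) (Sum.inl (1 : G)), by simp; omega, ?_⟩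
    rw [List.map_append, List.prod_append]
    have : ((List.replicate (r - sl.length) (Sum.inl (1 : G))).map (emb G H)).prod = 1 := by
      rw [List.map_replicate]
      simp [emb, List.prod_replicate]
    rw [this, mul_one]
  subst htlen
  rw [← htprod]
  refine ⟨fun k => (t.get k).elim id (fun _ => 1), fun k => (t.get k).elim (fun _ => 1) id, ?_⟩
  have hpt : ∀ k : Fin t.length,
      Coprod.inl ((t.get k).elim id (fun _ => (1 : G))) *
        Coprod.inr ((t.get k).elim (fun _ => (1 : H)) id) = emb G H (t.get k) := by
    intro k
    rcases t.get k with g | h <;> simp [emb]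
  calc (t.map (emb G H)).prod
      = ((List.finRange t.length).map (fun k => emb G H (t.get k))).prod := by
        rw [← List.ofFn_eq_map]; conv_lhs => rw [← List.ofFn_get t]
        rw [List.map_ofFn]; rfl
    _ = _ := by
        congr 1
        exact (List.map_congr_left (fun k _ => (hpt k).symm))

end Templ2

/-- **Main theorem (two factors).** Let `G` and `H` be qf-stable groups, `w(x̄, ȳ)`
a group word, and `r ≥ 1`. Then there exists `n` (depending on `w` and `r`)
bounding the `m` for which there exist tuples `ā_1, ..., ā_m` and `b̄_1, ..., b̄_m`
with all entries in the ball `B_r(G ∗ H)` such that `w(ā_i, b̄_j) = 1` iff `i ≤ j`. -/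
theorem main_theorem_two_factors {G H : Type*} [Group G] [Group H]
    (hG : QFStable G) (hH : QFStable H)
    (p q : ℕ) (w : FreeGroup (Fin p ⊕ Fin q)) (r : ℕ) (hr : 1 ≤ r) :
    ∃ n : ℕ, ∀ m : ℕ,
      (∃ (a : Fin m → Fin p → Coprod G H) (b : Fin m → Fin q → Coprod G H),
        (∀ i t, a i t ∈ coprodBall G H r) ∧ (∀ j t, b j t ∈ coprodBall G H r) ∧
        ∀ i j, FreeGroup.lift (Sum.elim (a i) (b j)) w = 1 ↔ i ≤ j) → m ≤ n := by
  classical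
  choose nG hnG using hG (p * r) (q * r)
  choose nH hnH using hH (p * r) (q * r)
  set N₀ := w.toWord.length with hN0
  set occ : Fin N₀ → (Fin p ⊕ Fin q) × Bool := fun n => w.toWord.get n with hoccdef
  letI : Fintype (Idx N₀ r) := inferInstanceAs (Fintype (Fin N₀ × (Fin r × Bool)))
  set bound : Bool × Finset (Idx N₀ r) → ℕ :=
    fun s => if s.1 then nG (wordS occ s) else nH (wordS occ s) with hbound
  set nEq := Finset.univ.sup bound with hnEqdef
  obtain ⟨nR, hRam⟩ := ramsey_pairs
    (((Bool × Finset (Idx N₀ r)) → Bool) × ((Bool × Finset (Idx N₀ r)) → Bool)) (2 * nEq + 4)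
  refine ⟨nR, fun m hm => ?_⟩
  obtain ⟨a, b, hab, hbb, hlad⟩ := hm
  by_contra hcon
  push_neg at hcon
  choose gA hA hdA using fun (i : Fin m) (t : Fin p) => ball_decomp (hab i t)
  choose gB hB hdB using fun (j : Fin m) (t : Fin q) => ball_decomp (hbb j t)
  set AG : Fin m → Fin m → (Fin p ⊕ Fin q) → Fin r → G :=
    fun i j => Sum.elim (gA i) (gB j) with hAGdef
  set AH : Fin m → Fin m → (Fin p ⊕ Fin q) → Fin r → H :=
    fun i j => Sum.elim (hA i) (hB j) with hAHdef
  set E : (Bool × Finset (Idx N₀ r)) → Fin m → Fin m → Prop := fun s i j =>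
    IsOne (evalS (fun n => FreeGroup.lift (flatF (AG i j)) (termF occ n))
                 (fun n => FreeGroup.lift (flatF (AH i j)) (termF occ n)) s) with hEdef
  have hw : (List.finRange N₀).map occ = w.toWord := by
    rw [← List.ofFn_eq_map]; exact List.ofFn_get _
  have hchar : ∀ i j : Fin m, (FreeGroup.lift (Sum.elim (a i) (b j)) w = 1) ↔
      AbsRed (fun s => E s i j) (templ (r := r) occ) := by
    intro i j
    have hprod : FreeGroup.lift (Sum.elim (a i) (b j)) w
        = (((templ occ).map (fun s => emb G H
            (evalS (fun n => FreeGroup.lift (flatF (AG i j)) (termF occ n))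
                   (fun n => FreeGroup.lift (flatF (AH i j)) (termF occ n)) s))).prod) := by
      rw [templ_prod occ (AG i j) (AH i j)]
      conv_lhs => rw [← FreeGroup.mk_toWord (x := w)]
      rw [FreeGroup.lift_mk, ← hw, List.map_map]
      congr 1
      apply List.map_congr_left
      intro n hn
      simp only [Function.comp_apply]
      have hblk : Sum.elim (a i) (b j) (occ n).1
          = ((List.finRange r).map
              (fun k => Coprod.inl (AG i j (occ n).1 k) * Coprod.inr (AH i j (occ n).1 k))).prod := by
        rcases hx : (occ n).1 with t | t
        · simp only [Sum.elim_inl, hAGdef, hAHdef]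
          exact hdA i t
        · simp only [Sum.elim_inr, hAGdef, hAHdef]
          exact hdB j t
      cases hs : (occ n).2 <;> simp only [Bool.cond_false, Bool.cond_true] <;> rw [hblk]
    constructor
    · intro h1
      exact absRed_of_prod_eq_one (templ (r := r) occ).length _ le_rfl (ordered_templ occ)
        (by rw [← hprod]; exact h1)
    · intro h2
      rw [hprod]
      exact prod_eq_one_of_absRed (fun s hs => hs) h2 (ordered_templ occ)
  set Vb : Fin m → Fin m → ((Bool × Finset (Idx N₀ r)) → Bool) :=
    fun i j s => decide (E s i j) with hVbdef
  set f : ℕ → ℕ → (((Bool × Finset (Idx N₀ r)) → Bool) × ((Bool × Finset (Idx N₀ r)) → Bool)) :=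
    fun i j =>
      if h : i < m ∧ j < m then (Vb ⟨i, h.1⟩ ⟨j, h.2⟩, Vb ⟨j, h.2⟩ ⟨i, h.1⟩)
      else (fun _ => false, fun _ => false) with hfdef
  obtain ⟨g, c, hmono, hmem, hcolor⟩ := hRam f (Finset.range m)
    (by rw [Finset.card_range]; omega)
  have hglt : ∀ k, g k < m := fun k => Finset.mem_range.mp (hmem k)
  set gm : Fin (2 * nEq + 4) → Fin m := fun k => ⟨g k, hglt k⟩ with hgmdef
  have hpair : ∀ k l, k < l → Vb (gm k) (gm l) = c.1 ∧ Vb (gm l) (gm k) = c.2 := by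
    intro k l hkl
    have hc := hcolor k l hkl
    rw [hfdef] at hc
    simp only [dif_pos (And.intro (hglt k) (hglt l))] at hc
    exact ⟨congrArg Prod.fst hc, congrArg Prod.snd hc⟩
  have hEV : ∀ (i j : Fin m) s, E s i j ↔ Vb i j s = true := by
    intro i j s
    rw [hVbdef]
    simp only [decide_eq_true_eq]
  have hgmlt : ∀ k l : Fin (2 * nEq + 4), k < l → gm k < gm l := by
    intro k l hkl
    simp only [hgmdef, Fin.mk_lt_mk]
    exact hmono hkl
  have h01 : (⟨0, by omega⟩ : Fin (2 * nEq + 4)) < ⟨1, by omega⟩ := by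
    simp [Fin.lt_def]
  have hA01 : AbsRed (fun s => c.1 s = true) (templ (r := r) occ) := by
    have hR01 : FreeGroup.lift (Sum.elim (a (gm ⟨0, by omega⟩)) (b (gm ⟨1, by omega⟩))) w = 1 :=
      (hlad _ _).mpr (le_of_lt (hgmlt _ _ h01))
    refine ((hchar _ _).mp hR01).congr_ok ?_
    intro s
    rw [hEV, (hpair _ _ h01).1]
  have hA10 : ¬ AbsRed (fun s => c.2 s = true) (templ (r := r) occ) := by
    intro hcon2
    have hRone : FreeGroup.lift (Sum.elim (a (gm ⟨1, by omega⟩)) (b (gm ⟨0, by omega⟩))) w = 1 := by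
      rw [hchar]
      refine hcon2.congr_ok ?_
      intro s
      rw [hEV, (hpair _ _ h01).2]
    exact absurd ((hlad _ _).mp hRone) (not_le.mpr (hgmlt _ _ h01))
  have hne : c.1 ≠ c.2 := fun hcc => hA10 (hcc ▸ hA01)
  obtain ⟨s0, hs0⟩ := Function.ne_iff.mp hne
  have hbnd : bound s0 ≤ nEq := Finset.le_sup (Finset.mem_univ s0)
  have hEword : ∀ i j : Fin m, E s0 i j ↔
      (if s0.1 then FreeGroup.lift (Sum.elim (fun u => gA i (finProdFinEquiv.symm u).1
            (finProdFinEquiv.symm u).2) (fun u => gB j (finProdFinEquiv.symm u).1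
            (finProdFinEquiv.symm u).2)) (wordS occ s0) = 1
        else FreeGroup.lift (Sum.elim (fun u => hA i (finProdFinEquiv.symm u).1
            (finProdFinEquiv.symm u).2) (fun u => hB j (finProdFinEquiv.symm u).1
            (finProdFinEquiv.symm u).2)) (wordS occ s0) = 1) := by
    intro i j
    have hflatG : flatF (AG i j) = Sum.elim (fun u => gA i (finProdFinEquiv.symm u).1
        (finProdFinEquiv.symm u).2) (fun u => gB j (finProdFinEquiv.symm u).1
        (finProdFinEquiv.symm u).2) := by
      funext u; cases u <;> rfl
    have hflatH : flatF (AH i j) = Sum.elim (fun u => hA i (finProdFinEquiv.symm u).1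
        (finProdFinEquiv.symm u).2) (fun u => hB j (finProdFinEquiv.symm u).1
        (finProdFinEquiv.symm u).2) := by
      funext u; cases u <;> rfl
    rw [hEdef]
    simp only []
    rw [evalS_word occ (flatF (AG i j)) (flatF (AH i j)) s0, hflatG, hflatH]
    rcases s0 with ⟨b0, S0⟩
    cases b0 <;> simp [IsOne]
  have hE01 : ∀ k l : Fin (2 * nEq + 4), k < l → (E s0 (gm k) (gm l) ↔ c.1 s0 = true) := by
    intro k l hkl
    rw [hEV, (hpair _ _ hkl).1]
  have hE10 : ∀ k l : Fin (2 * nEq + 4), k < l → (E s0 (gm l) (gm k) ↔ c.2 s0 = true) := by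
    intro k l hkl
    rw [hEV, (hpair _ _ hkl).2]
  have final : ∀ (i1 j2 : Fin (nEq + 1) → Fin m), (∀ u v, E s0 (i1 u) (j2 v) ↔ u ≤ v) → False := by
    intro i1 j2 hlad'
    rcases hb0 : s0.1 with _ | _
    · have hkey : ∀ u v : Fin (nEq + 1),
          FreeGroup.lift (Sum.elim (fun x => hA (i1 u) (finProdFinEquiv.symm x).1
            (finProdFinEquiv.symm x).2) (fun x => hB (j2 v) (finProdFinEquiv.symm x).1
            (finProdFinEquiv.symm x).2)) (wordS occ s0) = 1 ↔ u ≤ v := by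
        intro u v
        rw [← hlad' u v, hEword (i1 u) (j2 v), hb0]
        simp
      have hle := hnH (wordS occ s0) (nEq + 1) ⟨_, _, hkey⟩
      have hbeq : bound s0 = nH (wordS occ s0) := by rw [hbound]; simp [hb0]
      omega
    · have hkey : ∀ u v : Fin (nEq + 1),
          FreeGroup.lift (Sum.elim (fun x => gA (i1 u) (finProdFinEquiv.symm x).1
            (finProdFinEquiv.symm x).2) (fun x => gB (j2 v) (finProdFinEquiv.symm x).1
            (finProdFinEquiv.symm x).2)) (wordS occ s0) = 1 ↔ u ≤ v := by
        intro u v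
        rw [← hlad' u v, hEword (i1 u) (j2 v), hb0]
        simp
      have hle := hnG (wordS occ s0) (nEq + 1) ⟨_, _, hkey⟩
      have hbeq : bound s0 = nG (wordS occ s0) := by rw [hbound]; simp [hb0]
      omega
  rcases hv1 : c.1 s0 with _ | _ <;> rcases hv2 : c.2 s0 with _ | _
  · exact hs0 (hv1.trans hv2.symm)
  · -- c.1 s0 = false, c.2 s0 = true : reversed ladder
    refine final (fun u => gm ⟨2 * (nEq - u.val) + 1, by omega⟩)
      (fun v => gm ⟨2 * (nEq - v.val), by omega⟩) ?_
    intro u v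
    by_cases huv : u ≤ v
    · have hlt : (⟨2 * (nEq - v.val), by omega⟩ : Fin (2 * nEq + 4))
          < ⟨2 * (nEq - u.val) + 1, by omega⟩ := by
        have hu := u.isLt; have hv := v.isLt
        have : u.val ≤ v.val := huv
        simp only [Fin.mk_lt_mk]
        omega
      rw [hE10 _ _ hlt, hv2]
      simpa using huv
    · have hvu : v < u := not_le.mp huv
      have hlt : (⟨2 * (nEq - u.val) + 1, by omega⟩ : Fin (2 * nEq + 4))
          < ⟨2 * (nEq - v.val), by omega⟩ := by
        have hu := u.isLt; have hv := v.isLt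
        have : v.val < u.val := hvu
        simp only [Fin.mk_lt_mk]
        omega
      rw [hE01 _ _ hlt, hv1]
      simpa using huv
  · -- c.1 s0 = true, c.2 s0 = false : direct ladder
    refine final (fun u => gm ⟨2 * u.val, by omega⟩)
      (fun v => gm ⟨2 * v.val + 1, by omega⟩) ?_
    intro u v
    by_cases huv : u ≤ v
    · have hlt : (⟨2 * u.val, by omega⟩ : Fin (2 * nEq + 4))
          < ⟨2 * v.val + 1, by omega⟩ := by
        have : u.val ≤ v.val := huv
        simp only [Fin.mk_lt_mk]
        omega
      rw [hE01 _ _ hlt, hv1]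
      simpa using huv
    · have hvu : v < u := not_le.mp huv
      have hlt : (⟨2 * v.val + 1, by omega⟩ : Fin (2 * nEq + 4))
          < ⟨2 * u.val, by omega⟩ := by
        have : v.val < u.val := hvu
        simp only [Fin.mk_lt_mk]
        omega
      rw [hE10 _ _ hlt, hv2]
      simpa using huv
  · exact hs0 (hv1.trans hv2.symm)
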